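/- arXiv:2505.13946 — 2 statements merged into one kernel-verified Lean document; each statement's English description precedes it below -/
import Mathlib

section
/- With the setup of the previous identity (deterministic encoder f : 𝒳 → 𝒵, distributions P_X, Q_X with pushforwards P_Z, Q_Z, mixture conditionals M_{X|z}), the following inequality holds: √(2·D_JS(P_X || Q_X)) ≤ √(2·D_JS(P_Z || Q_Z)) + √( E_{z∼P_Z}[D_KL(P_{X|z} || M_{X|z})] + E_{z∼Q_Z}[D_KL(Q_{X|z} || M_{X|z})] ). -/
open Finset

noncomputable section

/-- Kullback–Leibler divergence between finite pmfs (natural log). -/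
def KLdiv {α : Type*} [Fintype α] (p q : α → ℝ) : ℝ :=
  ∑ a, p a * Real.log (p a / q a)

/-- Jensen–Shannon divergence between finite pmfs (natural log). -/
def JSdiv {α : Type*} [Fintype α] (p q : α → ℝ) : ℝ :=
  (1 / 2) * KLdiv p (fun a => (p a + q a) / 2)
    + (1 / 2) * KLdiv q (fun a => (p a + q a) / 2)

/-- Subadditivity of the square root. -/
lemma sqrt_add_le'' (a b : ℝ) (ha : 0 ≤ a) (hb : 0 ≤ b) :
    Real.sqrt (a + b) ≤ Real.sqrt a + Real.sqrt b := by
  rw [show a + b = Real.sqrt a ^ 2 + Real.sqrt b ^ 2 by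
    rw [Real.sq_sqrt ha, Real.sq_sqrt hb]]
  calc Real.sqrt (Real.sqrt a ^ 2 + Real.sqrt b ^ 2)
      ≤ Real.sqrt ((Real.sqrt a + Real.sqrt b) ^ 2) := by
        apply Real.sqrt_le_sqrt
        nlinarith [Real.sqrt_nonneg a, Real.sqrt_nonneg b]
    _ = Real.sqrt a + Real.sqrt b := by
        rw [Real.sqrt_sq (by positivity)]

/-- Gibbs' inequality. -/
lemma KL_nonneg {α : Type*} [Fintype α] (p q : α → ℝ)
    (hp : ∀ a, 0 ≤ p a) (hq : ∀ a, 0 ≤ q a)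
    (habs : ∀ a, q a = 0 → p a = 0)
    (hsum : ∑ a, q a ≤ ∑ a, p a) : 0 ≤ KLdiv p q := by
  have key : ∀ a, p a - q a ≤ p a * Real.log (p a / q a) := by
    intro a
    rcases eq_or_lt_of_le (hp a) with h0 | h0
    · simp [← h0, hq a]
    · have hqa : 0 < q a := by
        rcases eq_or_lt_of_le (hq a) with h1 | h1
        · exact absurd (habs a h1.symm) (by linarith)
        · exact h1
      have hlog : Real.log (q a / p a) ≤ q a / p a - 1 :=
        Real.log_le_sub_one_of_pos (by positivity)
      have hthis : Real.log (p a / q a) = - Real.log (q a / p a) := by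
        rw [← Real.log_inv]; congr 1; field_simp
      rw [hthis]
      have h2 : -(q a / p a - 1) ≤ - Real.log (q a / p a) := by linarith
      have heq : p a - q a = p a * -(q a / p a - 1) := by field_simp; ring
      calc p a - q a = p a * -(q a / p a - 1) := heq
        _ ≤ p a * - Real.log (q a / p a) :=
            mul_le_mul_of_nonneg_left h2 (le_of_lt h0)
  calc (0:ℝ) ≤ ∑ a, (p a - q a) := by rw [Finset.sum_sub_distrib]; linarith
    _ ≤ KLdiv p q := Finset.sum_le_sum (fun a _ => key a)

/-- Chain rule for KL against the mixture. -/
lemma KL_chain {𝒳 𝒵 : Type*} [Fintype 𝒳] [Fintype 𝒵] [DecidableEq 𝒵]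
    (f : 𝒳 → 𝒵) (P Q : 𝒳 → ℝ)
    (hP0 : ∀ x, 0 ≤ P x) (hQ0 : ∀ x, 0 ≤ Q x) :
    KLdiv P (fun x => (P x + Q x) / 2)
      = KLdiv (fun z => ∑ x, if f x = z then P x else 0)
          (fun z => ((∑ x, if f x = z then P x else 0) + (∑ x, if f x = z then Q x else 0)) / 2)
        + ∑ z, (∑ x, if f x = z then P x else 0) *
            KLdiv
              (fun x => (if f x = z then P x else 0) / ∑ x', if f x' = z then P x' else 0)
              (fun x => ((if f x = z then P x else 0) + (if f x = z then Q x else 0))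
                  / ((∑ x', if f x' = z then P x' else 0) + ∑ x', if f x' = z then Q x' else 0)) := by
  classical
  set PZ : 𝒵 → ℝ := fun z => ∑ x, if f x = z then P x else 0 with hPZ
  set QZ : 𝒵 → ℝ := fun z => ∑ x, if f x = z then Q x else 0 with hQZ
  have hPZ0 : ∀ z, 0 ≤ PZ z := fun z => Finset.sum_nonneg (fun x _ => by
    by_cases h : f x = z <;> simp [h, hP0 x])
  have hQZ0 : ∀ z, 0 ≤ QZ z := fun z => Finset.sum_nonneg (fun x _ => by
    by_cases h : f x = z <;> simp [h, hQ0 x])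
  have lhs_eq : KLdiv P (fun x => (P x + Q x) / 2)
      = ∑ z, ∑ x, if f x = z then P x * Real.log (P x / ((P x + Q x) / 2)) else 0 := by
    rw [Finset.sum_comm]
    unfold KLdiv
    apply Finset.sum_congr rfl
    intro x _
    simp
  rw [lhs_eq]
  unfold KLdiv
  rw [← Finset.sum_add_distrib]
  apply Finset.sum_congr rfl
  intro z _
  rcases eq_or_lt_of_le (hPZ0 z) with h0 | h0
  · have hx0 : ∀ x, f x = z → P x = 0 := by
      intro x hfx
      have := (Finset.sum_eq_zero_iff_of_nonneg (fun x _ => by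
        by_cases h : f x = z <;> simp [h, hP0 x])).1 h0.symm x (Finset.mem_univ x)
      simpa [hfx] using this
    have e1 : ∑ x, (if f x = z then P x * Real.log (P x / ((P x + Q x) / 2)) else 0) = 0 := by
      apply Finset.sum_eq_zero
      intro x _
      by_cases h : f x = z
      · simp [h, hx0 x h]
      · simp [h]
    rw [e1]
    have hz : (∑ x, if f x = z then P x else 0) = 0 := h0.symm
    simp [hz, h0.symm]
  · have hMZ : 0 < PZ z + QZ z := by linarith [hQZ0 z]
    have e2 : PZ z * ∑ x, ((if f x = z then P x else 0) / PZ z) *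
          Real.log (((if f x = z then P x else 0) / PZ z)
            / (((if f x = z then P x else 0) + (if f x = z then Q x else 0)) / (PZ z + QZ z)))
        = ∑ x, (if f x = z then P x else 0) *
          Real.log (((if f x = z then P x else 0) / PZ z)
            / (((if f x = z then P x else 0) + (if f x = z then Q x else 0)) / (PZ z + QZ z))) := by
      rw [Finset.mul_sum]
      apply Finset.sum_congr rfl
      intro x _
      rw [← mul_assoc, mul_div_cancel₀ _ (ne_of_gt h0)]
    have e3 : PZ z * Real.log (PZ z / ((PZ z + QZ z) / 2))
        = ∑ x, (if f x = z then P x else 0) * Real.log (PZ z / ((PZ z + QZ z) / 2)) := by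
      rw [← Finset.sum_mul]
    rw [e2, e3, ← Finset.sum_add_distrib]
    apply Finset.sum_congr rfl
    intro x _
    by_cases h : f x = z
    · simp only [h, if_pos rfl, if_true]
      rcases eq_or_lt_of_le (hP0 x) with hx0 | hx0
      · simp [← hx0]
      · have hQx : 0 < P x + Q x := by linarith [hQ0 x]
        have harg : P x / ((P x + Q x) / 2)
            = (PZ z / ((PZ z + QZ z) / 2)) * ((P x / PZ z) / ((P x + Q x) / (PZ z + QZ z))) := by
          field_simp
        rw [harg, Real.log_mul (div_pos h0 (by linarith)).ne'
          (div_pos (div_pos hx0 h0) (div_pos hQx hMZ)).ne', mul_add]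
    · simp [h]

/-- Nonnegativity of the conditional-KL sum. -/
lemma delta_nonneg {𝒳 𝒵 : Type*} [Fintype 𝒳] [Fintype 𝒵] [DecidableEq 𝒵]
    (f : 𝒳 → 𝒵) (P Q : 𝒳 → ℝ)
    (hP0 : ∀ x, 0 ≤ P x) (hQ0 : ∀ x, 0 ≤ Q x) :
    0 ≤ ∑ z, (∑ x, if f x = z then P x else 0) *
            KLdiv
              (fun x => (if f x = z then P x else 0) / ∑ x', if f x' = z then P x' else 0)
              (fun x => ((if f x = z then P x else 0) + (if f x = z then Q x else 0))
                  / ((∑ x', if f x' = z then P x' else 0) + ∑ x', if f x' = z then Q x' else 0)) := by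
  classical
  apply Finset.sum_nonneg
  intro z _
  set PZ : ℝ := ∑ x, if f x = z then P x else 0 with hPZ
  set QZ : ℝ := ∑ x, if f x = z then Q x else 0 with hQZ
  have hPZ0 : 0 ≤ PZ := Finset.sum_nonneg (fun x _ => by
    by_cases h : f x = z <;> simp [h, hP0 x])
  have hQZ0 : 0 ≤ QZ := Finset.sum_nonneg (fun x _ => by
    by_cases h : f x = z <;> simp [h, hQ0 x])
  rcases eq_or_lt_of_le hPZ0 with h0 | h0
  · rw [← h0, zero_mul]
  · have hMZ : 0 < PZ + QZ := by linarith
    apply mul_nonneg (le_of_lt h0)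
    apply KL_nonneg
    · intro x
      by_cases h : f x = z
      · simp only [h, if_pos rfl]
        exact div_nonneg (hP0 x) hPZ0
      · simp [h]
    · intro x
      by_cases h : f x = z
      · simp only [h, if_pos rfl]
        exact div_nonneg (add_nonneg (hP0 x) (hQ0 x)) hMZ.le
      · simp [h]
    · intro x hx
      rcases div_eq_zero_iff.1 hx with h1 | h1
      · have hp : (if f x = z then P x else 0) = 0 := by
          by_cases h : f x = z
          · have hpx := hP0 x; have hqx := hQ0 x
            simp [h] at h1 ⊢
            linarith
          · simp [h]
        rw [hp, zero_div]
      · exact absurd h1 (ne_of_gt hMZ)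
    · rw [← Finset.sum_div, ← Finset.sum_div, Finset.sum_add_distrib]
      rw [div_self (ne_of_gt h0), div_self (ne_of_gt hMZ)]

/-- Representation-divergence bound (Lemma B.3): for a deterministic encoder
`f : 𝒳 → 𝒵`, distributions `P_X`, `Q_X` with pushforwards `P_Z`, `Q_Z`, and
mixture conditionals `M_{X|z} = (P_{X|z} + Q_{X|z})/2`,
`√(2·D_JS(P_X‖Q_X)) ≤ √(2·D_JS(P_Z‖Q_Z))
  + √(E_{z∼P_Z}[D_KL(P_{X|z}‖M_{X|z})] + E_{z∼Q_Z}[D_KL(Q_{X|z}‖M_{X|z})])`. -/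
theorem sqrt_js_input_le_sqrt_js_rep_add_sqrt_delta
    {𝒳 𝒵 : Type*} [Fintype 𝒳] [Fintype 𝒵] [DecidableEq 𝒵]
    (f : 𝒳 → 𝒵) (P Q : 𝒳 → ℝ)
    (hP0 : ∀ x, 0 ≤ P x) (hP1 : ∑ x, P x = 1)
    (hQ0 : ∀ x, 0 ≤ Q x) (hQ1 : ∑ x, Q x = 1) :
    Real.sqrt (2 * JSdiv P Q)
      ≤ Real.sqrt (2 * JSdiv (fun z => ∑ x, if f x = z then P x else 0)
            (fun z => ∑ x, if f x = z then Q x else 0))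
        + Real.sqrt
            ((∑ z, (∑ x, if f x = z then P x else 0) *
                 KLdiv
                   (fun x => (if f x = z then P x else 0)
                       / ∑ x', if f x' = z then P x' else 0)
                   (fun x => ((if f x = z then P x else 0) + (if f x = z then Q x else 0))
                       / ((∑ x', if f x' = z then P x' else 0)
                           + ∑ x', if f x' = z then Q x' else 0)))
              + ∑ z, (∑ x, if f x = z then Q x else 0) *
                 KLdiv
                   (fun x => (if f x = z then Q x else 0)
                       / ∑ x', if f x' = z then Q x' else 0)
                   (fun x => ((if f x = z then P x else 0) + (if f x = z then Q x else 0))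
                       / ((∑ x', if f x' = z then P x' else 0)
                           + ∑ x', if f x' = z then Q x' else 0))) := by
  classical
  have hPZ0 : ∀ z, 0 ≤ ∑ x, if f x = z then P x else 0 := fun z =>
    Finset.sum_nonneg (fun x _ => by by_cases h : f x = z <;> simp [h, hP0 x])
  have hQZ0 : ∀ z, 0 ≤ ∑ x, if f x = z then Q x else 0 := fun z =>
    Finset.sum_nonneg (fun x _ => by by_cases h : f x = z <;> simp [h, hQ0 x])
  have hPZ1 : ∑ z, (∑ x, if f x = z then P x else 0) = 1 := by
    rw [Finset.sum_comm]; simpa [Finset.sum_ite_eq] using hP1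
  have hQZ1 : ∑ z, (∑ x, if f x = z then Q x else 0) = 1 := by
    rw [Finset.sum_comm]; simpa [Finset.sum_ite_eq] using hQ1
  have h1 := KL_chain f P Q hP0 hQ0
  have h2 := KL_chain f Q P hQ0 hP0
  have hMfun : (fun x => (Q x + P x) / 2) = (fun x => (P x + Q x) / 2) := by
    funext x; ring
  rw [hMfun] at h2
  have hMZfun : (fun z => ((∑ x, if f x = z then Q x else 0)
        + (∑ x, if f x = z then P x else 0)) / 2)
      = (fun z => ((∑ x, if f x = z then P x else 0)
        + (∑ x, if f x = z then Q x else 0)) / 2) := by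
    funext z; ring
  rw [hMZfun] at h2
  have hΔQ : (∑ z, (∑ x, if f x = z then Q x else 0) *
        KLdiv (fun x => (if f x = z then Q x else 0) / ∑ x', if f x' = z then Q x' else 0)
          (fun x => ((if f x = z then Q x else 0) + (if f x = z then P x else 0))
              / ((∑ x', if f x' = z then Q x' else 0) + ∑ x', if f x' = z then P x' else 0)))
      = ∑ z, (∑ x, if f x = z then Q x else 0) *
        KLdiv (fun x => (if f x = z then Q x else 0) / ∑ x', if f x' = z then Q x' else 0)
          (fun x => ((if f x = z then P x else 0) + (if f x = z then Q x else 0))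
              / ((∑ x', if f x' = z then P x' else 0) + ∑ x', if f x' = z then Q x' else 0)) := by
    apply Finset.sum_congr rfl
    intro z _
    have hm : (fun x => ((if f x = z then Q x else 0) + (if f x = z then P x else 0))
          / ((∑ x', if f x' = z then Q x' else 0) + ∑ x', if f x' = z then P x' else 0))
        = (fun x => ((if f x = z then P x else 0) + (if f x = z then Q x else 0))
          / ((∑ x', if f x' = z then P x' else 0) + ∑ x', if f x' = z then Q x' else 0)) := by
      funext x
      rw [add_comm ((if f x = z then Q x else 0)),
        add_comm (∑ x', if f x' = z then Q x' else 0)]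
    rw [hm]
  rw [hΔQ] at h2
  have key : 2 * JSdiv P Q
      = 2 * JSdiv (fun z => ∑ x, if f x = z then P x else 0)
          (fun z => ∑ x, if f x = z then Q x else 0)
        + ((∑ z, (∑ x, if f x = z then P x else 0) *
             KLdiv (fun x => (if f x = z then P x else 0) / ∑ x', if f x' = z then P x' else 0)
               (fun x => ((if f x = z then P x else 0) + (if f x = z then Q x else 0))
                   / ((∑ x', if f x' = z then P x' else 0) + ∑ x', if f x' = z then Q x' else 0)))
          + ∑ z, (∑ x, if f x = z then Q x else 0) *
             KLdiv (fun x => (if f x = z then Q x else 0) / ∑ x', if f x' = z then Q x' else 0)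
               (fun x => ((if f x = z then P x else 0) + (if f x = z then Q x else 0))
                   / ((∑ x', if f x' = z then P x' else 0) + ∑ x', if f x' = z then Q x' else 0))) := by
    simp only [JSdiv]
    linarith [h1, h2]
  rw [key]
  apply sqrt_add_le''
  · have hsum : ∑ z, ((∑ x, if f x = z then P x else 0) + (∑ x, if f x = z then Q x else 0)) / 2
        = 1 := by
      rw [← Finset.sum_div, Finset.sum_add_distrib, hPZ1, hQZ1]; norm_num
    have habsP : ∀ z, ((∑ x, if f x = z then P x else 0) + (∑ x, if f x = z then Q x else 0)) / 2 = 0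
        → (∑ x, if f x = z then P x else 0) = 0 := by
      intro z hz
      have := hPZ0 z; have := hQZ0 z
      have h3 : (∑ x, if f x = z then P x else 0) + (∑ x, if f x = z then Q x else 0) = 0 := by
        linarith
      linarith
    have habsQ : ∀ z, ((∑ x, if f x = z then P x else 0) + (∑ x, if f x = z then Q x else 0)) / 2 = 0
        → (∑ x, if f x = z then Q x else 0) = 0 := by
      intro z hz
      have := hPZ0 z; have := hQZ0 z
      have h3 : (∑ x, if f x = z then P x else 0) + (∑ x, if f x = z then Q x else 0) = 0 := by
        linarith
      linarith
    have hq0 : ∀ z, 0 ≤ ((∑ x, if f x = z then P x else 0) + (∑ x, if f x = z then Q x else 0)) / 2 :=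
      fun z => by have := hPZ0 z; have := hQZ0 z; linarith
    have g1 : 0 ≤ KLdiv (fun z => ∑ x, if f x = z then P x else 0)
        (fun z => ((∑ x, if f x = z then P x else 0) + (∑ x, if f x = z then Q x else 0)) / 2) :=
      KL_nonneg _ _ hPZ0 hq0 habsP (by rw [hsum, hPZ1])
    have g2 : 0 ≤ KLdiv (fun z => ∑ x, if f x = z then Q x else 0)
        (fun z => ((∑ x, if f x = z then P x else 0) + (∑ x, if f x = z then Q x else 0)) / 2) :=
      KL_nonneg _ _ hQZ0 hq0 habsQ (by rw [hsum, hQZ1])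
    simp only [JSdiv]
    linarith
  · exact add_nonneg (delta_nonneg f P Q hP0 hQ0) (hΔQ ▸ delta_nonneg f Q P hQ0 hP0)
end
end

section
/- Let P and Q be distributions on a finite product space 𝒵_v × 𝒵_t such that P and Q have identical conditionals in both directions: P_{Z_v|z_t} = Q_{Z_v|z_t} for all z_t and P_{Z_t|z_v} = Q_{Z_t|z_v} for all z_v (wherever defined, with M = (P+Q)/2). Then 2·D_JS(P_{Z_v Z_t} || Q_{Z_v Z_t}) = D_JS(P_{Z_v} || Q_{Z_v}) + D_JS(P_{Z_t} || Q_{Z_t}). -/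
open Finset

noncomputable section

lemma kl_mid_marginal {𝒵v 𝒵t : Type*} [Fintype 𝒵v] [Fintype 𝒵t]
    (p q : 𝒵v × 𝒵t → ℝ) (hp : ∀ a, 0 ≤ p a) (hq : ∀ a, 0 ≤ q a)
    (h : ∀ zv zt,
        p (zv, zt) * (∑ zt', q (zv, zt')) = q (zv, zt) * ∑ zt', p (zv, zt')) :
    KLdiv p (fun a => (p a + q a) / 2)
      = KLdiv (fun zv => ∑ zt, p (zv, zt))
          (fun zv => ((∑ zt, p (zv, zt)) + (∑ zt, q (zv, zt))) / 2) := by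
  unfold KLdiv
  rw [Fintype.sum_prod_type]
  refine Finset.sum_congr rfl fun zv _ => ?_
  rw [Finset.sum_mul]
  refine Finset.sum_congr rfl fun zt _ => ?_
  rcases eq_or_lt_of_le (hp (zv, zt)) with h0 | h0
  · simp [← h0]
  · congr 1
    have hpv : (0:ℝ) < ∑ zt', p (zv, zt') :=
      lt_of_lt_of_le h0 (Finset.single_le_sum (fun i _ => hp (zv, i)) (Finset.mem_univ zt))
    have hqv : (0:ℝ) ≤ ∑ zt', q (zv, zt') :=
      Finset.sum_nonneg fun i _ => hq (zv, i)
    have hma : (0:ℝ) < p (zv, zt) + q (zv, zt) :=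
      lt_of_lt_of_le h0 (le_add_of_nonneg_right (hq (zv, zt)))
    have hmv : (0:ℝ) < (∑ zt', p (zv, zt')) + ∑ zt', q (zv, zt') :=
      lt_of_lt_of_le hpv (le_add_of_nonneg_right hqv)
    have key : p (zv, zt) * ((∑ zt', p (zv, zt')) + ∑ zt', q (zv, zt'))
        = (∑ zt', p (zv, zt')) * (p (zv, zt) + q (zv, zt)) := by
      have := h zv zt; ring_nf; nlinarith [this]
    congr 1
    field_simp
    nlinarith [key]

/-- Bimodal JSD decomposition (Eq. B.4 of the paper): if `P` and `Q` on
`𝒵_v × 𝒵_t` have identical conditionals in both directions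
(`P_{Z_v|z_t} = Q_{Z_v|z_t}` and `P_{Z_t|z_v} = Q_{Z_t|z_v}` wherever
defined, expressed in cross-multiplied form), then
`2·D_JS(P ‖ Q) = D_JS(P_{Z_v} ‖ Q_{Z_v}) + D_JS(P_{Z_t} ‖ Q_{Z_t})`. -/
theorem two_js_joint_eq_js_marginals
    {𝒵v 𝒵t : Type*} [Fintype 𝒵v] [Fintype 𝒵t]
    (P Q : 𝒵v × 𝒵t → ℝ)
    (hP0 : ∀ a, 0 ≤ P a) (hP1 : ∑ a, P a = 1)
    (hQ0 : ∀ a, 0 ≤ Q a) (hQ1 : ∑ a, Q a = 1)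
    (hcondv : ∀ zv zt,
        P (zv, zt) * (∑ zv', Q (zv', zt)) = Q (zv, zt) * ∑ zv', P (zv', zt))
    (hcondt : ∀ zv zt,
        P (zv, zt) * (∑ zt', Q (zv, zt')) = Q (zv, zt) * ∑ zt', P (zv, zt')) :
    2 * JSdiv P Q
      = JSdiv (fun zv => ∑ zt, P (zv, zt)) (fun zv => ∑ zt, Q (zv, zt))
        + JSdiv (fun zt => ∑ zv, P (zv, zt)) (fun zt => ∑ zv, Q (zv, zt)) := by
  -- swapped versions
  set P' : 𝒵t × 𝒵v → ℝ := fun a => P (a.2, a.1) with hP'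
  set Q' : 𝒵t × 𝒵v → ℝ := fun a => Q (a.2, a.1) with hQ'
  have hswapP : KLdiv P' (fun a => (P' a + Q' a) / 2)
      = KLdiv P (fun a => (P a + Q a) / 2) := by
    unfold KLdiv
    rw [Fintype.sum_prod_type, Fintype.sum_prod_type, Finset.sum_comm]
  have hswapQ : KLdiv Q' (fun a => (P' a + Q' a) / 2)
      = KLdiv Q (fun a => (P a + Q a) / 2) := by
    unfold KLdiv
    rw [Fintype.sum_prod_type, Fintype.sum_prod_type, Finset.sum_comm]
  have hPv := kl_mid_marginal P Q hP0 hQ0 hcondt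
  have hQv := kl_mid_marginal Q P hQ0 hP0 (fun zv zt => (hcondt zv zt).symm)
  have hPt := kl_mid_marginal P' Q' (fun a => hP0 _) (fun a => hQ0 _)
      (fun zt zv => hcondv zv zt)
  have hQt := kl_mid_marginal Q' P' (fun a => hQ0 _) (fun a => hP0 _)
      (fun zt zv => (hcondv zv zt).symm)
  have hswapQ' : KLdiv Q' (fun a => (Q' a + P' a) / 2)
      = KLdiv Q (fun a => (Q a + P a) / 2) := by
    unfold KLdiv
    rw [Fintype.sum_prod_type, Fintype.sum_prod_type, Finset.sum_comm]
  rw [hswapP] at hPt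
  rw [hswapQ'] at hQt
  unfold JSdiv
  simp only [hP', hQ'] at hPt hQt
  have hcQP : (fun a : 𝒵v × 𝒵t => (Q a + P a) / 2)
      = (fun a => (P a + Q a) / 2) := by funext a; ring
  rw [hcQP] at hQv hQt
  have hcv : (fun zv => ((∑ zt, Q (zv, zt)) + ∑ zt, P (zv, zt)) / 2)
      = (fun zv => ((∑ zt, P (zv, zt)) + ∑ zt, Q (zv, zt)) / 2) := by
    funext zv; ring
  have hct : (fun zt => ((∑ zv, Q (zv, zt)) + ∑ zv, P (zv, zt)) / 2)
      = (fun zt => ((∑ zv, P (zv, zt)) + ∑ zv, Q (zv, zt)) / 2) := by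
    funext zt; ring
  rw [hcv] at hQv
  rw [hct] at hQt
  have e1 : KLdiv P (fun a => (P a + Q a) / 2)
      = (1/2) * KLdiv (fun zv => ∑ zt, P (zv, zt))
            (fun zv => ((∑ zt, P (zv, zt)) + ∑ zt, Q (zv, zt)) / 2)
        + (1/2) * KLdiv (fun zt => ∑ zv, P (zv, zt))
            (fun zt => ((∑ zv, P (zv, zt)) + ∑ zv, Q (zv, zt)) / 2) := by
    rw [← hPv, ← hPt]; ring
  have e2 : KLdiv Q (fun a => (P a + Q a) / 2)
      = (1/2) * KLdiv (fun zv => ∑ zt, Q (zv, zt))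
            (fun zv => ((∑ zt, P (zv, zt)) + ∑ zt, Q (zv, zt)) / 2)
        + (1/2) * KLdiv (fun zt => ∑ zv, Q (zv, zt))
            (fun zt => ((∑ zv, P (zv, zt)) + ∑ zv, Q (zv, zt)) / 2) := by
    rw [← hQv, ← hQt]; ring
  rw [e1, e2]; ring
end
end
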